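/- For integers n ≥ 3 and d with n-1 ≤ d < 2n-3, with h_d as given and α_d = (d-2n+3)(d-2n+2)/2, β_d = h_d - α_d: the sequence β is positive and β_{d+1} > h_{d+1}/2; moreover β_{d+1} ≤ C(4+d,3) so that γ_{d+1} = C(4+d,3) - β_{d+1} ≥ 0. -/
import Mathlib

lemma two_mul_choose (t : ℕ) : 2 * Nat.choose (3 + t) 2 = (t + 2) * (t + 3) := by
  induction t with
  | zero => rfl
  | succ k ih =>
    have h : 3 + (k + 1) = (3 + k) + 1 := by ring
    rw [h, Nat.choose_succ_succ, Nat.choose_one_right, Nat.mul_add, ih]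
    ring

lemma six_mul_choose (t : ℕ) : 6 * Nat.choose (4 + t) 3 = (t + 2) * (t + 3) * (t + 4) := by
  induction t with
  | zero => rfl
  | succ k ih =>
    have h : 4 + (k + 1) = (4 + k) + 1 := by ring
    have h2 : (4 : ℕ) + k = 3 + (k + 1) := by ring
    rw [h, Nat.choose_succ_succ, Nat.mul_add, ih, h2]
    have h3 : 6 * Nat.choose (3 + (k+1)) 2 = 3 * ((k + 3) * (k + 4)) := by
      calc 6 * Nat.choose (3 + (k+1)) 2 = 3 * (2 * Nat.choose (3 + (k+1)) 2) := by ring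
        _ = 3 * (((k+1) + 2) * ((k+1) + 3)) := by rw [two_mul_choose (k+1)]
        _ = 3 * ((k + 3) * (k + 4)) := by ring
    rw [h3]; ring

/-- For integers `n ≥ 3` and `n-1 ≤ d < 2n-3`, with
`h_{d+1} = (2+(d+1)-n)((d+1)² + (4-2n)(d+1) + 4n² - 4n + 3)/3`,
`α_{d+1} = (d-2n+4)(d-2n+3)/2` and `β_{d+1} = h_{d+1} - α_{d+1}`:
`β_{d+1}` is positive, `β_{d+1} > h_{d+1}/2`, and moreover `β_{d+1} ≤ C(4+d,3)`,
so that `γ_{d+1} = C(4+d,3) - β_{d+1} ≥ 0`. -/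
theorem stmt19 (n d : ℤ) (hn : 3 ≤ n) (hd1 : n - 1 ≤ d) (hd2 : d < 2 * n - 3) :
    (let h : ℚ := (2 + ((d : ℚ) + 1) - n) * (((d : ℚ) + 1) ^ 2
        + (4 - 2 * n) * ((d : ℚ) + 1) + 4 * (n : ℚ) ^ 2 - 4 * n + 3) / 3
     let α : ℚ := ((d : ℚ) - 2 * n + 4) * ((d : ℚ) - 2 * n + 3) / 2
     let β : ℚ := h - α
     0 < β ∧ β > h / 2 ∧ β ≤ (Nat.choose (4 + d.toNat) 3 : ℚ) ∧
       0 ≤ (Nat.choose (4 + d.toNat) 3 : ℚ) - β) := by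
  have hd0 : 0 ≤ d := by omega
  have htn : (d.toNat : ℤ) = d := Int.toNat_of_nonneg hd0
  have hc : (Nat.choose (4 + d.toNat) 3 : ℚ)
      = ((d : ℚ) + 2) * ((d : ℚ) + 3) * ((d : ℚ) + 4) / 6 := by
    have h6 := six_mul_choose d.toNat
    have h6q : (6 : ℚ) * (Nat.choose (4 + d.toNat) 3 : ℚ)
        = ((d.toNat : ℚ) + 2) * ((d.toNat : ℚ) + 3) * ((d.toNat : ℚ) + 4) := by
      exact_mod_cast congrArg (Nat.cast : ℕ → ℚ) h6
    have hdq : ((d.toNat : ℚ)) = (d : ℚ) := by exact_mod_cast congrArg (Int.cast : ℤ → ℚ) htn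
    rw [hdq] at h6q
    linarith
  rw [hc]
  intro h α β
  have hm : (0 : ℚ) ≤ (n : ℚ) - 3 := by
    have : (3:ℤ) ≤ n := hn; exact_mod_cast sub_nonneg.2 (by exact_mod_cast this)
  have hs : (0 : ℚ) ≤ (d : ℚ) - n + 1 := by
    have : (0:ℤ) ≤ d - n + 1 := by omega
    exact_mod_cast this
  have hu : (0 : ℚ) ≤ 2 * (n : ℚ) - 4 - d := by
    have : (0:ℤ) ≤ 2 * n - 4 - d := by omega
    exact_mod_cast this
  simp only [h, α, β]
  refine ⟨?_, ?_, ?_, ?_⟩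
  · nlinarith [mul_nonneg hm hs, mul_nonneg hm hm, mul_nonneg hs hs,
      mul_nonneg (mul_nonneg hs hs) hs, mul_nonneg (mul_nonneg hm hm) hs]
  · nlinarith [mul_nonneg hm hs, mul_nonneg hm hm, mul_nonneg hs hs,
      mul_nonneg (mul_nonneg hs hs) hs, mul_nonneg (mul_nonneg hm hm) hs]
  · nlinarith [mul_nonneg hu hu, mul_nonneg (mul_nonneg hu hu) hu]
  · nlinarith [mul_nonneg hu hu, mul_nonneg (mul_nonneg hu hu) hu]
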